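/- Let (x_n)_{n≥1} ⊆ [0,1] be a sequence and k ≥ 2 an integer. Assume that for some scales s_1,…,s_{k-1} > 0 one has limsup_{N→∞} R_k(s_1,…,s_{k-1},N) = ∞. Then for every integer p ≥ k the sequence (x_n) does not have Poissonian p-th order correlations. -/

import Mathlib

open Finset Filter MeasureTheory
open scoped Classical ENNReal NNReal

/-- Distance from `x` to the nearest integer. -/
noncomputable def nint (x : ℝ) : ℝ := |x - round x|

/-- Signed distance from `x` to the origin modulo 1. -/
noncomputable def sdist (x : ℝ) : ℝ :=
  if Int.fract x ≤ 1 / 2 then Int.fract x else Int.fract x - 1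

/-- Number of `k`-tuples of pairwise distinct indices in `{1,…,N}` whose rescaled signed
differences lie in the box `∏ r, [a r, b r]`. -/
noncomputable def corrBoxCount (x : ℕ → ℝ) (k N : ℕ) (a b : Fin (k - 1) → ℝ) : ℕ :=
  ((Fintype.piFinset fun _ : Fin k => Finset.Icc 1 N).filter fun i =>
    Function.Injective i ∧ ∀ r : Fin (k - 1),
      (N : ℝ) * sdist (x (i ⟨0, by have := r.2; omega⟩) - x (i ⟨r.1 + 1, by have := r.2; omega⟩))
        ∈ Set.Icc (a r) (b r)).card

/-- The sequence `x` (indexed by `n ≥ 1`) has Poissonian correlations of order `k`. -/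
def HasPoissonianCorr (x : ℕ → ℝ) (k : ℕ) : Prop :=
  ∀ a b : Fin (k - 1) → ℝ, (∀ r, a r ≤ b r) →
    Tendsto (fun N : ℕ => (corrBoxCount x k N a b : ℝ) / N) atTop
      (nhds (∏ r, (b r - a r)))

/-- The `k`-th order correlation function `R_k(s₁,…,s_{k-1},N)` (pairwise distinct indices). -/
noncomputable def Rcorr (x : ℕ → ℝ) (k N : ℕ) (s : Fin (k - 1) → ℝ) : ℝ :=
  (((Fintype.piFinset fun _ : Fin k => Finset.Icc 1 N).filter fun i =>
    Function.Injective i ∧ ∀ r : Fin (k - 1),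
      nint (x (i ⟨0, by have := r.2; omega⟩) - x (i ⟨r.1 + 1, by have := r.2; omega⟩))
        ≤ s r / N).card : ℝ) / N

/-- The `k`-th order correlation function `R_k^*(s₁,…,s_{k-1},N)` (indices not necessarily
distinct). -/
noncomputable def RcorrStar (x : ℕ → ℝ) (k N : ℕ) (s : Fin (k - 1) → ℝ) : ℝ :=
  (((Fintype.piFinset fun _ : Fin k => Finset.Icc 1 N).filter fun i =>
    ∀ r : Fin (k - 1),
      nint (x (i ⟨0, by have := r.2; omega⟩) - x (i ⟨r.1 + 1, by have := r.2; omega⟩))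
        ≤ s r / N).card : ℝ) / N

/-! ### Auxiliary lemmas -/

lemma nint_eq_abs_sdist (y : ℝ) : nint y = |sdist y| := by
  have hf0 := Int.fract_nonneg y
  have hf1 := Int.fract_lt_one y
  have hr : ((round y : ℤ) : ℝ) = (⌊y⌋ : ℝ) + (⌊Int.fract y + 1/2⌋ : ℤ) := by
    rw [round_eq]
    have h2 : y + 1/2 = (Int.fract y + 1/2) + (⌊y⌋ : ℤ) := by
      rw [Int.fract]; push_cast; ring
    rw [h2, Int.floor_add_intCast]; push_cast; ring
  have hy : y = (⌊y⌋ : ℝ) + Int.fract y := by rw [Int.fract]; ring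
  unfold nint sdist
  rw [abs_eq_abs]
  rcases lt_or_ge (Int.fract y) (1/2) with h | h
  · have hc : ⌊Int.fract y + 1/2⌋ = (0:ℤ) :=
      Int.floor_eq_iff.mpr ⟨by push_cast; linarith, by push_cast; linarith⟩
    rw [if_pos h.le]; left; rw [hr, hc]; push_cast; linarith
  · have hc : ⌊Int.fract y + 1/2⌋ = (1:ℤ) :=
      Int.floor_eq_iff.mpr ⟨by push_cast; linarith, by push_cast; linarith⟩
    by_cases h2 : Int.fract y ≤ 1/2
    · have he : Int.fract y = 1/2 := le_antisymm h2 h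
      rw [if_pos h2]; right; rw [hr, hc, he]; push_cast; linarith
    · rw [if_neg h2]; left; rw [hr, hc]; push_cast; linarith

lemma card_inj_piFinset (n : ℕ) (t : Finset ℕ) :
    ((Fintype.piFinset fun _ : Fin n => t).filter fun f => Function.Injective f).card
      = t.card.descFactorial n := by
  have e : ↥((Fintype.piFinset fun _ : Fin n => t).filter fun f => Function.Injective f)
      ≃ (Fin n ↪ ↥t) := by
    refine
      { toFun := fun f => ⟨fun i => ⟨f.1 i, ?_⟩, fun a b h => ?_⟩
        invFun := fun g => ⟨fun i => (g i).1, ?_⟩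
        left_inv := fun f => ?_
        right_inv := fun g => ?_ }
    · exact Fintype.mem_piFinset.mp (Finset.mem_filter.mp f.2).1 i
    · exact (Finset.mem_filter.mp f.2).2 (congrArg Subtype.val h)
    · refine Finset.mem_filter.mpr ⟨Fintype.mem_piFinset.mpr fun i => (g i).2,
        fun a b h => g.injective (Subtype.ext h)⟩
    · ext i; rfl
    · ext i; rfl
  calc ((Fintype.piFinset fun _ : Fin n => t).filter fun f => Function.Injective f).card
      = Fintype.card ↥((Fintype.piFinset fun _ : Fin n => t).filter
          fun f => Function.Injective f) := (Fintype.card_coe _).symm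
    _ = Fintype.card (Fin n ↪ ↥t) := Fintype.card_congr e
    _ = (Fintype.card ↥t).descFactorial (Fintype.card (Fin n)) := Fintype.card_embedding_eq
    _ = t.card.descFactorial n := by rw [Fintype.card_coe, Fintype.card_fin]

lemma stepA_aux (x : ℕ → ℝ) (k N : ℕ) (hk : 2 ≤ k) (hN : 1 ≤ N)
    (s : Fin (k-1) → ℝ) (S : ℝ) (hsS : ∀ r, s r ≤ S)
    (ball : ℕ → Finset ℕ)
    (hball : ∀ m, ball m = (Finset.Icc 1 N).filter fun j => j ≠ m ∧ nint (x m - x j) ≤ S / N) :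
    ((Fintype.piFinset fun _ : Fin k => Finset.Icc 1 N).filter fun i =>
      Function.Injective i ∧ ∀ r : Fin (k - 1),
        nint (x (i ⟨0, by have := r.2; omega⟩) - x (i ⟨r.1 + 1, by have := r.2; omega⟩))
          ≤ s r / N).card
      ≤ ∑ m ∈ Finset.Icc 1 N, (ball m).card ^ (k-1) := by
  have hNR : (0:ℝ) < N := by exact_mod_cast Nat.lt_of_lt_of_le Nat.zero_lt_one hN
  rw [Finset.card_eq_sum_card_fiberwise
    (f := fun i : Fin k → ℕ => i ⟨0, by omega⟩) (t := Finset.Icc 1 N)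
    (fun i hi => Fintype.mem_piFinset.mp (Finset.mem_filter.mp hi).1 _)]
  apply Finset.sum_le_sum
  intro m hm
  have hcard : (Fintype.piFinset fun _ : Fin (k-1) => ball m).card
      = (ball m).card ^ (k-1) := by
    rw [Fintype.card_piFinset]; simp [Finset.prod_const]
  rw [← hcard]
  apply Finset.card_le_card_of_injOn
    (fun i => fun r : Fin (k-1) => i ⟨r.1 + 1, by have := r.2; omega⟩)
  · intro i hi
    obtain ⟨hi1, hi0⟩ := Finset.mem_filter.mp hi
    obtain ⟨hipf, hiinj, hicond⟩ := Finset.mem_filter.mp hi1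
    rw [Finset.mem_coe, Fintype.mem_piFinset]
    intro r
    rw [hball]
    refine Finset.mem_filter.mpr ⟨Fintype.mem_piFinset.mp hipf _, ?_, ?_⟩
    · intro hEq
      have h2 : i ⟨r.1 + 1, by have := r.2; omega⟩ = i ⟨0, by omega⟩ := by
        exact hEq.trans hi0.symm
      have := hiinj h2
      simp [Fin.ext_iff] at this
    · have hcr := hicond r
      rw [hi0] at hcr
      calc nint (x m - x (i ⟨r.1 + 1, by have := r.2; omega⟩)) ≤ s r / N := hcr
        _ ≤ S / N := by gcongr; exact hsS r
  · intro i hi i' hi' heq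
    obtain ⟨_, hi0⟩ := Finset.mem_filter.mp (Finset.mem_coe.mp hi)
    obtain ⟨_, hi0'⟩ := Finset.mem_filter.mp (Finset.mem_coe.mp hi')
    funext j
    rcases j with ⟨jv, hjv⟩
    rcases Nat.eq_zero_or_pos jv with h0 | hpos
    · subst h0
      exact hi0.trans hi0'.symm
    · have h2 : i ⟨jv - 1 + 1, by omega⟩ = i' ⟨jv - 1 + 1, by omega⟩ :=
        congrFun heq ⟨jv - 1, by omega⟩
      have e : (⟨jv - 1 + 1, by omega⟩ : Fin k) = ⟨jv, hjv⟩ := by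
        apply Fin.ext; simp; omega
      rwa [e] at h2

lemma stepD_aux (x : ℕ → ℝ) (p N : ℕ) (hp : 2 ≤ p) (hN : 1 ≤ N)
    (S : ℝ)
    (ball : ℕ → Finset ℕ)
    (hball : ∀ m, ball m = (Finset.Icc 1 N).filter fun j => j ≠ m ∧ nint (x m - x j) ≤ S / N) :
    ∑ m ∈ Finset.Icc 1 N, (ball m).card.descFactorial (p-1)
      ≤ corrBoxCount x p N (fun _ => -S) (fun _ => S) := by
  have hNR : (0:ℝ) < N := by exact_mod_cast Nat.lt_of_lt_of_le Nat.zero_lt_one hN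
  have hsum : ∑ m ∈ Finset.Icc 1 N, (ball m).card.descFactorial (p-1)
      = ((Finset.Icc 1 N).sigma (fun m =>
          (Fintype.piFinset fun _ : Fin (p-1) => ball m).filter
            fun f => Function.Injective f)).card := by
    rw [Finset.card_sigma]
    exact Finset.sum_congr rfl fun m _ => (card_inj_piFinset _ _).symm
  rw [hsum]
  unfold corrBoxCount
  apply Finset.card_le_card_of_injOn
    (fun q : (_ : ℕ) × (Fin (p-1) → ℕ) =>
      fun j : Fin p => if h : j.1 = 0 then q.1 else q.2 ⟨j.1 - 1, by have := j.2; omega⟩)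
  · intro q hq
    obtain ⟨hq1, hq2⟩ := Finset.mem_sigma.mp hq
    obtain ⟨hq2p, hq2inj⟩ := Finset.mem_filter.mp hq2
    have hq2mem : ∀ r, q.2 r ∈ ball q.1 := Fintype.mem_piFinset.mp hq2p
    have hballmem : ∀ r, q.2 r ∈ Finset.Icc 1 N ∧ q.2 r ≠ q.1 ∧
        nint (x q.1 - x (q.2 r)) ≤ S / N := by
      intro r
      have h3 := hq2mem r
      rw [hball] at h3
      have := Finset.mem_filter.mp h3
      exact ⟨this.1, this.2⟩
    refine Finset.mem_filter.mpr ⟨?_, ?_, ?_⟩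
    · rw [Fintype.mem_piFinset]
      intro j
      by_cases h : j.1 = 0
      · simpa [h] using hq1
      · simpa [h] using (hballmem ⟨j.1 - 1, by have := j.2; omega⟩).1
    · intro j j' hjj'
      by_cases h : j.1 = 0 <;> by_cases h' : j'.1 = 0
      · exact Fin.ext (h.trans h'.symm)
      · simp only [dif_pos h, dif_neg h'] at hjj'
        exact absurd hjj'.symm (hballmem ⟨j'.1 - 1, by have := j'.2; omega⟩).2.1
      · simp only [dif_neg h, dif_pos h'] at hjj'
        exact absurd hjj' (hballmem ⟨j.1 - 1, by have := j.2; omega⟩).2.1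
      · simp only [dif_neg h, dif_neg h'] at hjj'
        have h4 := hq2inj hjj'
        apply Fin.ext
        simp only [Fin.mk.injEq] at h4
        omega
    · intro r
      have hr1 : ¬ ((⟨r.1 + 1, by have := r.2; omega⟩ : Fin p).1 = 0) := by simp
      have hval : (fun j : Fin p => if h : j.1 = 0 then q.1
            else q.2 ⟨j.1 - 1, by have := j.2; omega⟩)
          ⟨r.1 + 1, by have := r.2; omega⟩ = q.2 r := by
        simp only [dif_neg hr1]
        exact congrArg q.2 (Fin.ext (by simp))
      have hval0 : (fun j : Fin p => if h : j.1 = 0 then q.1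
            else q.2 ⟨j.1 - 1, by have := j.2; omega⟩)
          ⟨0, by have := r.2; omega⟩ = q.1 := by simp
      beta_reduce at hval hval0 ⊢
      rw [hval, hval0]
      have hn := (hballmem r).2.2
      rw [nint_eq_abs_sdist] at hn
      have habs : |(N:ℝ) * sdist (x q.1 - x (q.2 r))| ≤ S := by
        rw [abs_mul, abs_of_nonneg (le_of_lt hNR)]
        calc (N:ℝ) * |sdist (x q.1 - x (q.2 r))| ≤ N * (S / N) :=
              mul_le_mul_of_nonneg_left hn (le_of_lt hNR)
          _ = S := by field_simp
      have h5 := abs_le.mp habs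
      exact Set.mem_Icc.mpr ⟨h5.1, h5.2⟩
  · intro q hq q' hq' heq
    have hm : q.1 = q'.1 := by
      have := congrFun heq ⟨0, by omega⟩
      simpa using this
    have hf : q.2 = q'.2 := by
      funext r
      have h2 := congrFun heq ⟨r.1 + 1, by have := r.2; omega⟩
      have hr1 : ¬ ((⟨r.1 + 1, by have := r.2; omega⟩ : Fin p).1 = 0) := by simp
      simp only [dif_neg hr1] at h2
      exact h2
    obtain ⟨m, f⟩ := q
    obtain ⟨m', f'⟩ := q'
    simp only at hm hf
    subst hm; subst hf; rfl

lemma pow_le_aux (k p dm : ℕ) (hk : 2 ≤ k) (hkp : k ≤ p) :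
    dm ^ (k-1) ≤ (2*p)^(p-1) + 2^(p-1) * dm.descFactorial (p-1) := by
  rcases lt_or_ge dm (2*p) with h | h
  · have h1 : dm ^ (k-1) ≤ (2*p)^(p-1) :=
      le_trans (Nat.pow_le_pow_left h.le _)
        (Nat.pow_le_pow_right (by omega) (by omega))
    omega
  · have h1 : dm ^ (k-1) ≤ dm ^ (p-1) := Nat.pow_le_pow_right (by omega) (by omega)
    have h2 : dm ^ (p-1) ≤ 2^(p-1) * dm.descFactorial (p-1) := by
      rw [Nat.descFactorial_eq_prod_range]
      calc dm^(p-1) = ∏ _j ∈ Finset.range (p-1), dm := by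
            rw [Finset.prod_const, Finset.card_range]
        _ ≤ ∏ j ∈ Finset.range (p-1), 2 * (dm - j) := by
            apply Finset.prod_le_prod'
            intro j hj
            have := Finset.mem_range.mp hj
            omega
        _ = 2^(p-1) * ∏ j ∈ Finset.range (p-1), (dm - j) := by
            rw [Finset.prod_mul_distrib, Finset.prod_const, Finset.card_range]
    omega

lemma count_key (x : ℕ → ℝ) (k p N : ℕ) (hk : 2 ≤ k) (hkp : k ≤ p) (hN : 1 ≤ N)
    (s : Fin (k-1) → ℝ) (S : ℝ) (hS : 0 < S) (hsS : ∀ r, s r ≤ S) :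
    ((Fintype.piFinset fun _ : Fin k => Finset.Icc 1 N).filter fun i =>
      Function.Injective i ∧ ∀ r : Fin (k - 1),
        nint (x (i ⟨0, by have := r.2; omega⟩) - x (i ⟨r.1 + 1, by have := r.2; omega⟩))
          ≤ s r / N).card
    ≤ N * (2*p)^(p-1) + 2^(p-1) * corrBoxCount x p N (fun _ => -S) (fun _ => S) := by
  have hp2 : 2 ≤ p := le_trans hk hkp
  have hA := stepA_aux x k N hk hN s S hsS
    (fun m => (Finset.Icc 1 N).filter fun j => j ≠ m ∧ nint (x m - x j) ≤ S / N)
    (fun m => rfl)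
  have hD := stepD_aux x p N hp2 hN S
    (fun m => (Finset.Icc 1 N).filter fun j => j ≠ m ∧ nint (x m - x j) ≤ S / N)
    (fun m => rfl)
  refine le_trans hA (le_trans (Finset.sum_le_sum fun m _ => pow_le_aux k p
    (((Finset.Icc 1 N).filter fun j => j ≠ m ∧ nint (x m - x j) ≤ S / N).card) hk hkp) ?_)
  have heq : ∑ m ∈ Finset.Icc 1 N, ((2*p)^(p-1) + 2^(p-1) *
      (((Finset.Icc 1 N).filter fun j => j ≠ m ∧ nint (x m - x j) ≤ S / N).card.descFactorial (p-1)))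
      = N * (2*p)^(p-1) + 2^(p-1) * ∑ m ∈ Finset.Icc 1 N,
        (((Finset.Icc 1 N).filter fun j => j ≠ m ∧ nint (x m - x j) ≤ S / N).card.descFactorial (p-1)) := by
    rw [Finset.sum_add_distrib, Finset.sum_const, ← Finset.mul_sum, Nat.card_Icc]
    simp [Nat.mul_comm]
  refine le_trans (le_of_eq heq) ?_
  exact Nat.add_le_add_left (Nat.mul_le_mul_left _ hD) _

lemma div_glue (N : ℝ) (hN : 0 < N) (A B C D : ℝ) (h : A ≤ N * C + D * B) :
    A / N ≤ C + D * (B / N) := by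
  rw [div_le_iff₀ hN]
  calc A ≤ N * C + D * B := h
    _ = (C + D * (B / N)) * N := by field_simp

/-- If `limsup_N R_k(s₁,…,s_{k-1},N) = ∞` for some scales, then the sequence
does not have Poissonian `p`-th order correlations for any `p ≥ k`. -/
theorem limsup_Rk_infinite_implies_not_poissonian_higher
    (k : ℕ) (hk : 2 ≤ k) (x : ℕ → ℝ) (hx : ∀ n, x n ∈ Set.Icc (0 : ℝ) 1)
    (s : Fin (k - 1) → ℝ) (hs : ∀ r, 0 < s r)
    (hinf : ∀ M : ℝ, ∃ᶠ N in atTop, M ≤ Rcorr x k N s) :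
    ∀ p : ℕ, k ≤ p → ¬ HasPoissonianCorr x p := by
  intro p hkp hPo
  haveI : Nonempty (Fin (k-1)) := ⟨⟨0, by omega⟩⟩
  obtain ⟨S, hSpos, hsS⟩ : ∃ S : ℝ, 0 < S ∧ ∀ r, s r ≤ S :=
    ⟨∑ r, s r, Finset.sum_pos (fun r _ => hs r) Finset.univ_nonempty,
      fun r => Finset.single_le_sum (f := s) (fun i _ => (hs i).le) (Finset.mem_univ r)⟩
  have hT := hPo (fun _ => -S) (fun _ => S) (fun r => by show -S ≤ S; linarith)
  have hprod : (∏ r : Fin (p-1), ((fun _ : Fin (p-1) => S) r - (fun _ : Fin (p-1) => -S) r))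
      = (2*S)^(p-1) := by
    simp only [sub_neg_eq_add, Finset.prod_const, Finset.card_univ, Fintype.card_fin]
    rw [two_mul]
  rw [hprod] at hT
  have hEv : ∀ᶠ N in atTop,
      (corrBoxCount x p N (fun _ => -S) (fun _ => S) : ℝ) / N ≤ (2*S)^(p-1) + 1 :=
    hT.eventually (eventually_le_nhds (lt_add_one _))
  obtain ⟨N, hRM, hCb, hN1⟩ :=
    ((hinf ((2*(p:ℝ))^(p-1) + 2^(p-1) * ((2*S)^(p-1) + 1) + 1)).and_eventually
      (hEv.and (eventually_ge_atTop 1))).exists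
  have hNR : (0:ℝ) < N := by exact_mod_cast Nat.lt_of_lt_of_le Nat.zero_lt_one hN1
  have hkey := count_key x k p N hk hkp hN1 s S hSpos hsS
  have hkeyR : Rcorr x k N s ≤ (2*(p:ℝ))^(p-1) + 2^(p-1) *
      ((corrBoxCount x p N (fun _ => -S) (fun _ => S) : ℝ) / N) := by
    unfold Rcorr
    refine div_glue (N:ℝ) hNR _ _ _ _ ?_
    exact_mod_cast hkey
  have hfin : (2*(p:ℝ))^(p-1) + 2^(p-1) *
      ((corrBoxCount x p N (fun _ => -S) (fun _ => S) : ℝ) / N)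
      ≤ (2*(p:ℝ))^(p-1) + 2^(p-1) * ((2*S)^(p-1) + 1) := by
    gcongr
  linarith
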